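/- Let p be a prime and let K be an algebraic closure of the field 𝔽_p with p elements. Then the polynomial x³y³(x + y)(x² + y²) + (x² + xy + y²) is irreducible in the polynomial ring K[x,y]. -/

import Mathlib

open MvPolynomial

namespace IrredAux

variable {K : Type*} [Field K]

/-- Abbreviation for the base ring. -/
local notation "D" => MvPolynomial (Fin 2) K

noncomputable def Apoly : MvPolynomial (Fin 2) K := X 0 ^ 2 + X 0 * X 1 + X 1 ^ 2

noncomputable def Bpoly : MvPolynomial (Fin 2) K :=
  X 0 ^ 3 * X 1 ^ 3 * (X 0 + X 1) * (X 0 ^ 2 + X 1 ^ 2)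

noncomputable def Rpoly : MvPolynomial (Fin 2) K :=
  X 1 ^ 3 * (X 0 + X 1) * (X 0 ^ 2 + X 1 ^ 2)

noncomputable def qpoly : Polynomial (MvPolynomial (Fin 2) K) :=
  Polynomial.C Bpoly * Polynomial.X ^ 7 + Polynomial.C Apoly

/-- Substitution `x ↦ t x`, `y ↦ t y`. -/
noncomputable def ψ : MvPolynomial (Fin 2) K →ₐ[K] Polynomial (MvPolynomial (Fin 2) K) :=
  aeval fun i => Polynomial.C (X i) * Polynomial.X

lemma eval_one_psi (g : D) : Polynomial.eval 1 (ψ g) = g := by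
  induction g using MvPolynomial.induction_on with
  | C a => simp [ψ, algebraMap_eq]
  | add p q hp hq => simp [map_add, hp, hq]
  | mul_X p i hp =>
    rw [show ψ (p * X i) = ψ p * (Polynomial.C (X i) * Polynomial.X) by simp [ψ]]
    simp [hp]

lemma prime_X0 : Prime (X 0 : D) := by
  rw [← MulEquiv.prime_iff (MvPolynomial.finSuccEquiv K 1).toMulEquiv]
  simpa [MvPolynomial.finSuccEquiv_X_zero] using
    (Polynomial.prime_X : Prime (Polynomial.X (R := MvPolynomial (Fin 1) K)))

lemma prime_X1 : Prime (X 1 : D) := by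
  rw [← MulEquiv.prime_iff (MvPolynomial.renameEquiv K (Equiv.swap (0 : Fin 2) 1)).toMulEquiv]
  simpa [Equiv.swap_apply_right] using prime_X0 (K := K)

lemma X0_not_dvd_A : ¬ (X 0 : D) ∣ Apoly := by
  rintro ⟨m, hm⟩
  have := congrArg (aeval (R := K) ![0, (X 1 : D)]) hm
  simp [Apoly] at this

lemma X1_not_dvd_A : ¬ (X 1 : D) ∣ Apoly := by
  rintro ⟨m, hm⟩
  have := congrArg (aeval (R := K) ![(X 0 : D), 0]) hm
  simp [Apoly] at this

lemma X0_not_dvd_R : ¬ (X 0 : D) ∣ Rpoly := by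
  rintro ⟨m, hm⟩
  have := congrArg (aeval (R := K) ![0, (X 1 : D)]) hm
  simp [Rpoly] at this

lemma A_ne_zero : (Apoly : D) ≠ 0 := fun h => X0_not_dvd_A (h ▸ dvd_zero _)

lemma xy_ne_zero : (X 0 + X 1 : D) ≠ 0 := by
  intro h
  have := congrArg (aeval (R := K) ![(X 0 : D), 0]) h
  simp at this

lemma x2y2_ne_zero : (X 0 ^ 2 + X 1 ^ 2 : D) ≠ 0 := by
  intro h
  have := congrArg (aeval (R := K) ![(X 0 : D), 0]) h
  simp at this

lemma B_ne_zero : (Bpoly : D) ≠ 0 := by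
  refine mul_ne_zero (mul_ne_zero (mul_ne_zero ?_ ?_) xy_ne_zero) x2y2_ne_zero
  · exact pow_ne_zero _ (MvPolynomial.X_ne_zero 0)
  · exact pow_ne_zero _ (MvPolynomial.X_ne_zero 1)

lemma R_ne_zero : (Rpoly : D) ≠ 0 := by
  refine mul_ne_zero (mul_ne_zero ?_ xy_ne_zero) x2y2_ne_zero
  exact pow_ne_zero _ (MvPolynomial.X_ne_zero 1)

/-- `A` and `B` have no common nonunit factor. -/
lemma coprime_AB (r : D) (hA : r ∣ Apoly) (hB : r ∣ Bpoly) : IsUnit r := by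
  by_contra hr
  have hr0 : r ≠ 0 := fun h => A_ne_zero (by simpa [h] using hA)
  obtain ⟨π, hπirr, hπr⟩ := WfDvdMonoid.exists_irreducible_factor hr hr0
  have hπ : Prime π := UniqueFactorizationMonoid.irreducible_iff_prime.mp hπirr
  have hπA : π ∣ Apoly := hπr.trans hA
  have hπB : π ∣ Bpoly := hπr.trans hB
  -- reduce to π ∣ X 0 or π ∣ X 1
  have hxy : π ∣ (X 0 : D) ∨ π ∣ (X 1 : D) := by
    have h1 := hπB
    rw [Bpoly] at h1
    rcases (hπ.dvd_mul.mp h1) with h2 | h2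
    · rcases (hπ.dvd_mul.mp h2) with h3 | h3
      · rcases (hπ.dvd_mul.mp h3) with h4 | h4
        · exact Or.inl (hπ.dvd_of_dvd_pow h4)
        · exact Or.inr (hπ.dvd_of_dvd_pow h4)
      · -- π ∣ x + y ; then π ∣ A - x*(x+y) = y^2
        have : π ∣ (X 1 : D) ^ 2 := by
          have : (X 1 : D) ^ 2 = Apoly - X 0 * (X 0 + X 1) := by rw [Apoly]; ring
          rw [this]
          exact dvd_sub hπA (h3.mul_left _)
        exact Or.inr (hπ.dvd_of_dvd_pow this)
    · -- π ∣ x^2 + y^2 ; then π ∣ A - (x^2+y^2) = x*y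
      have : π ∣ (X 0 : D) * X 1 := by
        have : (X 0 : D) * X 1 = Apoly - (X 0 ^ 2 + X 1 ^ 2) := by rw [Apoly]; ring
        rw [this]
        exact dvd_sub hπA h2
      exact hπ.dvd_mul.mp this
  rcases hxy with h | h
  · have : Associated π (X 0 : D) := hπirr.associated_of_dvd (UniqueFactorizationMonoid.irreducible_iff_prime.mpr prime_X0) h
    exact X0_not_dvd_A (this.symm.dvd.trans hπA)
  · have : Associated π (X 1 : D) := hπirr.associated_of_dvd (UniqueFactorizationMonoid.irreducible_iff_prime.mpr prime_X1) h
    exact X1_not_dvd_A (this.symm.dvd.trans hπA)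

open UniqueFactorizationMonoid in
/-- `-A/B` is not a 7th power: counting multiplicity of `X 0` gives `3 ≡ 0 [MOD 7]`. -/
lemma not_seventh_power (c d : D) (hd : d ≠ 0) (h : c ^ 7 * Bpoly = d ^ 7 * Apoly) : False := by
  classical
  letI : NormalizationMonoid D := (UniqueFactorizationMonoid.normalizationMonoid (α := D)).toNormalizationMonoid
  have hc : c ≠ 0 := by
    rintro rfl
    exact (mul_ne_zero (pow_ne_zero 7 hd) A_ne_zero) (by simpa using h.symm)
  set nrm := fun z : D => Multiset.count (normalize (X 0 : D)) (normalizedFactors z) with hnrm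
  have hX0count : nrm (X 0) = 1 := by
    rw [hnrm]
    simp [normalizedFactors_irreducible
      (UniqueFactorizationMonoid.irreducible_iff_prime.mpr (prime_X0 (K := K)))]
  have count_mul : ∀ a b : D, a ≠ 0 → b ≠ 0 → nrm (a * b) = nrm a + nrm b := by
    intro a b ha hb
    rw [hnrm]
    simp [normalizedFactors_mul ha hb]
  have count_pow : ∀ (a : D) (n : ℕ), nrm (a ^ n) = n * nrm a := by
    intro a n
    rw [hnrm]
    simp [normalizedFactors_pow, Multiset.count_nsmul]
  have count_zero_of_not_dvd : ∀ a : D, ¬ (X 0 : D) ∣ a → nrm a = 0 := by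
    intro a ha
    rw [hnrm]
    simp only
    rw [Multiset.count_eq_zero]
    intro hmem
    exact ha (((normalize_associated (X 0 : D)).symm.dvd).trans (dvd_of_mem_normalizedFactors hmem))
  have hBsplit : (Bpoly : D) = X 0 ^ 3 * Rpoly := by rw [Bpoly, Rpoly]; ring
  have hBcount : nrm Bpoly = 3 := by
    rw [hBsplit, count_mul _ _ (pow_ne_zero _ (MvPolynomial.X_ne_zero 0)) R_ne_zero,
      count_pow, hX0count, count_zero_of_not_dvd _ X0_not_dvd_R]
  have hAcount : nrm Apoly = 0 := count_zero_of_not_dvd _ X0_not_dvd_A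
  have hkey := congrArg nrm h
  rw [count_mul _ _ (pow_ne_zero _ hc) B_ne_zero, count_mul _ _ (pow_ne_zero _ hd) A_ne_zero,
    count_pow, count_pow, hBcount, hAcount] at hkey
  omega

lemma q_prime : Prime (qpoly (K := K)) := by
  classical
  letI : NormalizationMonoid D := (UniqueFactorizationMonoid.normalizationMonoid (α := D)).toNormalizationMonoid
  letI : NormalizedGCDMonoid D := UniqueFactorizationMonoid.toNormalizedGCDMonoid D
  rw [← UniqueFactorizationMonoid.irreducible_iff_prime]
  have hprim : (qpoly (K := K)).IsPrimitive := by
    intro r hr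
    rw [Polynomial.C_dvd_iff_dvd_coeff] at hr
    have h0 := hr 0
    have h7 := hr 7
    simp [qpoly, Polynomial.coeff_add, Polynomial.coeff_C_mul, Polynomial.coeff_X_pow,
      Polynomial.coeff_C] at h0 h7
    exact coprime_AB r h0 h7
  set F := FractionRing D
  rw [hprim.irreducible_iff_irreducible_map_fraction_map (K := F)]
  have hBF : algebraMap D F Bpoly ≠ 0 :=
    (map_ne_zero_iff _ (IsFractionRing.injective D F)).mpr B_ne_zero
  set s : F := -(algebraMap D F Apoly / algebraMap D F Bpoly) with hs
  have hpow : ∀ b : F, b ^ 7 ≠ s := by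
    intro b hb
    obtain ⟨c, d, hd, rfl⟩ := IsFractionRing.div_surjective (A := D) b
    have hdF : algebraMap D F d ≠ 0 :=
      (map_ne_zero_iff _ (IsFractionRing.injective D F)).mpr (nonZeroDivisors.ne_zero hd)
    rw [hs, div_pow, div_eq_iff (pow_ne_zero _ hdF)] at hb
    have h2 : algebraMap D F c ^ 7 * algebraMap D F Bpoly
        = -(algebraMap D F d ^ 7 * algebraMap D F Apoly) := by
      rw [hb, mul_right_comm, neg_mul, div_mul_cancel₀ _ hBF]; ring
    have h3 : algebraMap D F (c ^ 7 * Bpoly) = algebraMap D F ((-d) ^ 7 * Apoly) := by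
      rw [map_mul, map_pow, map_mul, map_pow, map_neg, h2]; ring
    exact not_seventh_power c (-d) (neg_ne_zero.mpr (nonZeroDivisors.ne_zero hd))
      (IsFractionRing.injective D F h3)
  have hirr : Irreducible (Polynomial.X ^ 7 - Polynomial.C s) :=
    X_pow_sub_C_irreducible_of_prime (by norm_num) hpow
  have hmap : (qpoly (K := K)).map (algebraMap D F) =
      Polynomial.C (algebraMap D F Bpoly) * (Polynomial.X ^ 7 - Polynomial.C s) := by
    rw [qpoly]
    push_cast [Polynomial.map_add, Polynomial.map_mul, Polynomial.map_pow, Polynomial.map_C,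
      Polynomial.map_X]
    rw [mul_sub, ← Polynomial.C_mul, hs]
    rw [show algebraMap D F Bpoly * -(algebraMap D F Apoly / algebraMap D F Bpoly)
        = -algebraMap D F Apoly by rw [mul_neg, mul_comm, div_mul_cancel₀ _ hBF]]
    rw [Polynomial.C_neg]
    ring
  rw [hmap, irreducible_isUnit_mul (Polynomial.isUnit_C.mpr (isUnit_iff_ne_zero.mpr hBF))]
  exact hirr

lemma psi_f :
    ψ (X 0 ^ 3 * X 1 ^ 3 * (X 0 + X 1) * (X 0 ^ 2 + X 1 ^ 2)
        + (X 0 ^ 2 + X 0 * X 1 + X 1 ^ 2) : D)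
      = Polynomial.X ^ 2 * qpoly := by
  simp only [ψ, qpoly, Apoly, Bpoly, map_add, map_mul, map_pow, aeval_X, Polynomial.C_add,
    Polynomial.C_mul, Polynomial.C_pow]
  ring

lemma main : Irreducible (X 0 ^ 3 * X 1 ^ 3 * (X 0 + X 1) * (X 0 ^ 2 + X 1 ^ 2)
    + (X 0 ^ 2 + X 0 * X 1 + X 1 ^ 2) : D) := by
  set f : D := X 0 ^ 3 * X 1 ^ 3 * (X 0 + X 1) * (X 0 ^ 2 + X 1 ^ 2)
    + (X 0 ^ 2 + X 0 * X 1 + X 1 ^ 2) with hf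
  have hψf : ψ f = Polynomial.X ^ 2 * qpoly := psi_f
  have hq := q_prime (K := K)
  constructor
  · intro hu
    have h1 : IsUnit (ψ f) := hu.map ψ
    rw [hψf] at h1
    have h2 : (Polynomial.X : Polynomial D) ∣ Polynomial.X ^ 2 * qpoly :=
      dvd_mul_of_dvd_left (dvd_pow_self _ (by norm_num)) _
    exact Polynomial.not_isUnit_X (isUnit_of_dvd_unit h2 h1)
  · intro g h hgh
    have hdvd : qpoly ∣ ψ g * ψ h := by
      rw [← map_mul, ← hgh, hψf]
      exact ⟨Polynomial.X ^ 2, mul_comm _ _⟩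
    rcases hq.2.2 _ _ hdvd with hg | hh
    · right
      obtain ⟨r, hr⟩ := hg
      have h1 : qpoly * (r * ψ h) = qpoly * Polynomial.X ^ 2 := by
        rw [← mul_assoc, ← hr, ← map_mul, ← hgh, hψf]; ring
      have h2 : r * ψ h = Polynomial.X ^ 2 := mul_left_cancel₀ hq.ne_zero h1
      have h3 := congrArg (Polynomial.eval 1) h2
      rw [Polynomial.eval_mul, eval_one_psi] at h3
      simp at h3
      exact IsUnit.of_mul_eq_one (a := h) _ (by rw [mul_comm]; exact h3)
    · left
      obtain ⟨r, hr⟩ := hh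
      have h1 : qpoly * (r * ψ g) = qpoly * Polynomial.X ^ 2 := by
        rw [← mul_assoc, ← hr, ← map_mul, mul_comm h g, ← hgh, hψf]; ring
      have h2 : r * ψ g = Polynomial.X ^ 2 := mul_left_cancel₀ hq.ne_zero h1
      have h3 := congrArg (Polynomial.eval 1) h2
      rw [Polynomial.eval_mul, eval_one_psi] at h3
      simp at h3
      exact IsUnit.of_mul_eq_one (a := g) _ (by rw [mul_comm]; exact h3)

end IrredAux

/-- The polynomial `x³y³(x + y)(x² + y²) + (x² + xy + y²)` is irreducible over the
algebraic closure of `𝔽_p`. -/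
theorem irreducible_aux_poly (p : ℕ) [Fact p.Prime] (K : Type*) [Field K]
    [Algebra (ZMod p) K] [IsAlgClosure (ZMod p) K] :
    Irreducible (X 0 ^ 3 * X 1 ^ 3 * (X 0 + X 1) * (X 0 ^ 2 + X 1 ^ 2)
      + (X 0 ^ 2 + X 0 * X 1 + X 1 ^ 2) : MvPolynomial (Fin 2) K) := by
  exact IrredAux.main
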